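/- Let k > 0, d > 0 and let φ be a random variable with values in [-1,1] such that P(φ = 1) = α and P(φ = -1 + ε) = 1 - α, where ε = (1 - cosh(d) + sinh(d))/sinh(d) and α = (1 - ε)/(2 - ε). Then E[φ] = 0, and E[log(cosh(d) + φ·sinh(d))] = α·d. -/

import Mathlib

open MeasureTheory Real

theorem two_point_phi_expectations {Ω : Type*} [MeasurableSpace Ω]
    (μ : Measure Ω) [IsProbabilityMeasure μ]
    (k d : ℝ) (hk : 0 < k) (hd : 0 < d)
    (φ : Ω → ℝ) (hφmeas : Measurable φ) (hφrange : ∀ ω, φ ω ∈ Set.Icc (-1 : ℝ) 1)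
    (ε α : ℝ)
    (hε : ε = (1 - cosh d + sinh d) / sinh d)
    (hα : α = (1 - ε) / (2 - ε))
    (h1 : μ {ω | φ ω = 1} = ENNReal.ofReal α)
    (h2 : μ {ω | φ ω = -1 + ε} = ENNReal.ofReal (1 - α)) :
    (∫ ω, φ ω ∂μ) = 0 ∧
    (∫ ω, log (cosh d + φ ω * sinh d) ∂μ) = α * d := by
  have hsinh : 0 < sinh d := Real.sinh_pos_iff.mpr hd
  have hcosh : 1 < cosh d := Real.one_lt_cosh.mpr hd.ne'
  have hε1 : ε < 1 := by
    rw [hε, div_lt_one hsinh]; linarith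
  have hcne : (-1 + ε : ℝ) ≠ 1 := by linarith
  have h2ε : (2 - ε : ℝ) ≠ 0 := by linarith
  have hα0 : 0 ≤ α := by
    rw [hα]; apply div_nonneg <;> linarith
  have hα1 : α ≤ 1 := by
    rw [hα, div_le_one (by linarith)]; linarith
  set A : Set Ω := {ω | φ ω = 1} with hAdef
  set B : Set Ω := {ω | φ ω = -1 + ε} with hBdef
  have hA : MeasurableSet A := hφmeas (measurableSet_singleton 1)
  have hB : MeasurableSet B := hφmeas (measurableSet_singleton (-1 + ε))
  have hdisj : Disjoint A B := by
    rw [Set.disjoint_left]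
    intro ω hωA hωB
    exact hcne (hωB.symm.trans hωA)
  have hunion : μ (A ∪ B) = 1 := by
    rw [measure_union hdisj hB, h1, h2, ← ENNReal.ofReal_add hα0 (by linarith)]
    norm_num
  have hcompl : μ (A ∪ B)ᶜ = 0 := by
    rw [measure_compl (hA.union hB) (measure_ne_top _ _), hunion, measure_univ]
    simp
  have hae : ∀ᵐ ω ∂μ, φ ω = 1 ∨ φ ω = -1 + ε := by
    have hset : {ω | φ ω = 1 ∨ φ ω = -1 + ε} = A ∪ B := by
      ext ω; simp [hAdef, hBdef, Set.mem_union]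
    rw [Filter.eventually_iff, mem_ae_iff, hset]
    exact hcompl
  have hμA : (μ A).toReal = α := by
    rw [h1, ENNReal.toReal_ofReal hα0]
  constructor
  · have hcongr : ∫ ω, φ ω ∂μ
        = ∫ ω, (A.indicator (fun _ => (1 - (-1 + ε))) ω + (-1 + ε)) ∂μ := by
      refine integral_congr_ae ?_
      filter_upwards [hae] with ω hω
      rcases hω with h | h
      · have : ω ∈ A := h
        rw [Set.indicator_of_mem this, h]; ring
      · have : ω ∉ A := by
          intro hc
          exact hcne ((h.symm.trans (hc : φ ω = 1)))
        rw [Set.indicator_of_notMem this, h]; ring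
    rw [hcongr, integral_add ((integrable_const _).indicator hA) (integrable_const _),
      integral_indicator_const _ hA, integral_const, probReal_univ, measureReal_def, hμA]
    simp only [smul_eq_mul, ENNReal.toReal_one, one_smul]
    rw [hα]; field_simp; ring
  · have hval : cosh d + (-1 + ε) * sinh d = 1 := by
      rw [hε]; field_simp; ring
    have hcongr : ∫ ω, log (cosh d + φ ω * sinh d) ∂μ
        = ∫ ω, (A.indicator (fun _ => d) ω) ∂μ := by
      refine integral_congr_ae ?_
      filter_upwards [hae] with ω hω
      rcases hω with h | h
      · have hm : ω ∈ A := h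
        rw [Set.indicator_of_mem hm, h, one_mul, Real.cosh_add_sinh, Real.log_exp]
      · have hm : ω ∉ A := by
          intro hc
          exact hcne ((h.symm.trans (hc : φ ω = 1)))
        rw [Set.indicator_of_notMem hm, h, hval, Real.log_one]
    rw [hcongr, integral_indicator_const _ hA, measureReal_def, hμA, smul_eq_mul]
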